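/- Fix q with −1 < q ≤ 1 and let X be the Jacobi matrix of the Jacobi sequence ω n = 1 + q + q² + ⋯ + q^n and α n = 0 (the quantum decomposition of the q-Gaussian distribution). Then for every natural number m, lim_{k→∞} ⟨(X/√(ω k + ω(k−1)))^m e_k, e_k⟩ = ∫_{−√2}^{√2} x^m/(π√(2−x²)) dx. -/

import Mathlib

open Filter

/-- The Jacobi matrix of a Jacobi sequence `(ω, α)`, acting on finitely supported
real sequences indexed by `ℕ`:
`X e_n = √(ω n)·e_{n+1} + α n·e_n + √(ω (n-1))·e_{n-1}`, last term omitted for `n = 0`. -/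
noncomputable def jacobiOp (ω α : ℕ → ℝ) : (ℕ →₀ ℝ) →ₗ[ℝ] (ℕ →₀ ℝ) :=
  Finsupp.lsum ℝ fun n => LinearMap.toSpanSingleton ℝ (ℕ →₀ ℝ)
    (Real.sqrt (ω n) • Finsupp.single (n + 1) 1 + α n • Finsupp.single n 1 +
      if n = 0 then 0 else Real.sqrt (ω (n - 1)) • Finsupp.single (n - 1) 1)

/-- The `q`-Gaussian Jacobi sequence `ω n = 1 + q + q² + ⋯ + qⁿ`. -/
noncomputable def qOmega (q : ℝ) (n : ℕ) : ℝ := ∑ i ∈ Finset.range (n + 1), q ^ i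

namespace QGaussAux

open Real Set MeasureTheory intervalIntegral


/-- number of ±1 walks of length `m` from `0` to `j`. -/
def NN : ℕ → ℤ → ℕ
  | 0, j => if j = 0 then 1 else 0
  | m+1, j => NN m (j-1) + NN m (j+1)

noncomputable def tt : ℕ → ℤ → ℝ
  | 0, j => if j = 0 then 1 else 0
  | m+1, j => (Real.sqrt 2)⁻¹ * tt m (j-1) + (Real.sqrt 2)⁻¹ * tt m (j+1)

lemma tt_eq (m : ℕ) (j : ℤ) : tt m j = ((Real.sqrt 2)⁻¹)^m * NN m j := by
  induction m generalizing j with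
  | zero => simp only [tt, NN, pow_zero, one_mul]; split <;> simp
  | succ m ih =>
    simp only [tt, NN, ih, pow_succ]
    push_cast
    ring

lemma NN_eq_zero_of_odd (m : ℕ) (j : ℤ) (h : ¬ (2 ∣ (j + m))) : NN m j = 0 := by
  induction m generalizing j with
  | zero => simp only [NN]; rw [if_neg]; omega
  | succ m ih =>
    simp only [NN]
    rw [ih (j-1) (by push_cast at h ⊢; omega), ih (j+1) (by push_cast at h ⊢; omega)]

lemma NN_eq_zero_of_lt (m : ℕ) (j : ℤ) (h : m < j.natAbs) : NN m j = 0 := by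
  induction m generalizing j with
  | zero => simp only [NN]; rw [if_neg]; omega
  | succ m ih =>
    simp only [NN]
    rw [ih (j-1) (by omega), ih (j+1) (by omega)]

lemma NN_choose (m : ℕ) : ∀ i : ℕ, i ≤ m → NN m (2*(i:ℤ) - m) = m.choose i := by
  induction m with
  | zero => intro i hi; interval_cases i; simp [NN]
  | succ m ih =>
    intro i hi
    match i with
    | 0 =>
      simp only [NN]
      push_cast
      rw [show (0:ℤ) - ((m:ℤ)+1) - 1 = -((m:ℤ)+2) by ring,
          show (0:ℤ) - ((m:ℤ)+1) + 1 = 2*((0:ℕ):ℤ) - m by push_cast; ring]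
      rw [NN_eq_zero_of_lt _ _ (by omega), ih 0 (by omega)]
      simp
    | (i+1) =>
      have e1 : 2*((i:ℤ)+1) - (m+1) - 1 = 2*(i:ℤ) - m := by ring
      have e2 : 2*((i:ℤ)+1) - (m+1) + 1 = 2*((i:ℤ)+1) - m := by ring
      push_cast
      simp only [NN]
      push_cast at e1 e2
      rw [e1, e2, ih i (by omega)]
      rcases Nat.lt_or_ge i m with h | h
      · rw [show 2*((i:ℤ)+1) - m = 2*((i:ℤ)+1) - m by rfl]
        have := ih (i+1) (by omega)
        push_cast at this
        rw [this, Nat.choose_succ_succ']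
      · have hi' : i = m := by omega
        subst hi'
        rw [NN_eq_zero_of_lt _ _ (by omega)]
        simp [Nat.choose_succ_self, Nat.choose_self]

lemma NN_even (n : ℕ) : NN (2*n) 0 = Nat.centralBinom n := by
  have := NN_choose (2*n) n (by omega)
  rw [show 2*(n:ℤ) - (2*n:ℕ) = 0 by push_cast; ring] at this
  rw [this, Nat.centralBinom]

lemma NN_odd (n : ℕ) : NN (2*n+1) 0 = 0 :=
  NN_eq_zero_of_odd _ _ (by push_cast; omega)



lemma integral_odd_vanish (m : ℕ) (hm : Odd m) :
    (∫ x in (-Real.sqrt 2)..(Real.sqrt 2), x ^ m / (Real.pi * Real.sqrt (2 - x ^ 2))) = 0 := by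
  set f : ℝ → ℝ := fun x => x ^ m / (Real.pi * Real.sqrt (2 - x ^ 2)) with hf
  have hodd : ∀ x, f (-x) = - f x := by
    intro x
    simp only [hf, hm.neg_pow, neg_sq, neg_div]
  have h := intervalIntegral.integral_comp_neg (a := -Real.sqrt 2) (b := Real.sqrt 2) f
  rw [neg_neg] at h
  have h2 : (∫ x in (-Real.sqrt 2)..(Real.sqrt 2), f (-x)) =
      - ∫ x in (-Real.sqrt 2)..(Real.sqrt 2), f x := by
    rw [← intervalIntegral.integral_neg]
    congr 1
    ext x
    exact hodd x
  rw [h2] at h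
  linarith

lemma sin_pow_reflect (n : ℕ) :
    (∫ x in (-(Real.pi/2))..(Real.pi/2), Real.sin x ^ (2*n)) =
      ∫ x in (0:ℝ)..Real.pi, Real.sin x ^ (2*n) := by
  have hint : ∀ a b : ℝ, IntervalIntegrable (fun x => Real.sin x ^ (2*n)) volume a b :=
    fun a b => (Real.continuous_sin.pow _).intervalIntegrable a b
  have hA : (∫ x in (-(Real.pi/2))..(0:ℝ), Real.sin x ^ (2*n)) =
      ∫ x in (0:ℝ)..(Real.pi/2), Real.sin x ^ (2*n) := by
    have := intervalIntegral.integral_comp_neg (a := (0:ℝ)) (b := Real.pi/2)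
      (fun x => Real.sin x ^ (2*n))
    rw [neg_zero] at this
    rw [← this]
    congr 1
    ext x
    rw [Real.sin_neg, Even.neg_pow (even_two_mul n)]
  have hB : (∫ x in (Real.pi/2)..Real.pi, Real.sin x ^ (2*n)) =
      ∫ x in (0:ℝ)..(Real.pi/2), Real.sin x ^ (2*n) := by
    have := intervalIntegral.integral_comp_sub_left (a := (0:ℝ)) (b := Real.pi/2)
      (fun x => Real.sin x ^ (2*n)) Real.pi
    rw [sub_zero, show Real.pi - Real.pi/2 = Real.pi/2 by ring] at this
    rw [← this]
    congr 1
    ext x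
    rw [Real.sin_pi_sub]
  have s1 : (∫ x in (-(Real.pi/2))..(Real.pi/2), Real.sin x ^ (2*n)) =
      (∫ x in (-(Real.pi/2))..(0:ℝ), Real.sin x ^ (2*n)) +
        ∫ x in (0:ℝ)..(Real.pi/2), Real.sin x ^ (2*n) :=
    (intervalIntegral.integral_add_adjacent_intervals (hint _ _) (hint _ _)).symm
  have s2 : (∫ x in (0:ℝ)..Real.pi, Real.sin x ^ (2*n)) =
      (∫ x in (0:ℝ)..(Real.pi/2), Real.sin x ^ (2*n)) +
        ∫ x in (Real.pi/2)..Real.pi, Real.sin x ^ (2*n) :=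
    (intervalIntegral.integral_add_adjacent_intervals (hint _ _) (hint _ _)).symm
  rw [s1, s2, hA, hB]

lemma prod_ratio (n : ℕ) :
    (∏ i ∈ Finset.range n, (2*(i:ℝ)+1)/(2*i+2)) = (Nat.centralBinom n : ℝ)/4^n := by
  induction n with
  | zero => simp [Nat.centralBinom]
  | succ n ih =>
    rw [Finset.prod_range_succ, ih]
    have key : ((n:ℝ)+1) * (Nat.centralBinom (n+1) : ℝ) = 2*(2*(n:ℝ)+1) * Nat.centralBinom n := by
      exact_mod_cast Nat.succ_mul_centralBinom_succ n
    have hn : ((n:ℝ)+1) ≠ 0 := by positivity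
    have h4 : (4:ℝ)^n ≠ 0 := by positivity
    field_simp
    linear_combination (-(2:ℝ) * 4^n) * key







lemma image_sin_Ioo :
    (fun θ : ℝ => Real.sqrt 2 * Real.sin θ) '' Ioo (-(Real.pi/2)) (Real.pi/2)
      = Ioo (-Real.sqrt 2) (Real.sqrt 2) := by
  have h2 : (0:ℝ) < Real.sqrt 2 := Real.sqrt_pos.2 (by norm_num)
  have hpi := Real.pi_pos
  ext x
  constructor
  · rintro ⟨θ, hθ, rfl⟩
    have hmem : θ ∈ Icc (-(Real.pi/2)) (Real.pi/2) := Ioo_subset_Icc_self hθ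
    have hub : Real.sin θ < 1 := by
      have := Real.strictMonoOn_sin hmem (by constructor <;> linarith) hθ.2
      rwa [Real.sin_pi_div_two] at this
    have hlb : -1 < Real.sin θ := by
      have := Real.strictMonoOn_sin (by constructor <;> linarith : -(Real.pi/2) ∈ Icc (-(Real.pi/2)) (Real.pi/2)) hmem hθ.1
      rwa [Real.sin_neg, Real.sin_pi_div_two] at this
    refine ⟨?_, ?_⟩ <;> beta_reduce <;> nlinarith
  · intro hx
    refine ⟨Real.arcsin (x / Real.sqrt 2), ⟨?_, ?_⟩, ?_⟩
    · exact Real.neg_pi_div_two_lt_arcsin.2 (by rw [lt_div_iff₀ h2]; linarith [hx.1])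
    · exact Real.arcsin_lt_pi_div_two.2 ((div_lt_one h2).2 hx.2)
    · beta_reduce
      rw [Real.sin_arcsin (by rw [le_div_iff₀ h2]; linarith [hx.1])
        ((div_le_one h2).2 hx.2.le)]
      rw [mul_comm, div_mul_cancel₀ x h2.ne']

lemma integral_even_val (n : ℕ) :
    (∫ x in (-Real.sqrt 2)..(Real.sqrt 2), x ^ (2*n) / (Real.pi * Real.sqrt (2 - x ^ 2)))
      = (Nat.centralBinom n : ℝ) / 2^n := by
  have h2 : (0:ℝ) < Real.sqrt 2 := Real.sqrt_pos.2 (by norm_num)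
  have hpi := Real.pi_pos
  have hle : -Real.sqrt 2 ≤ Real.sqrt 2 := by linarith
  rw [intervalIntegral.integral_of_le hle, integral_Ioc_eq_integral_Ioo, ← image_sin_Ioo]
  rw [MeasureTheory.integral_image_eq_integral_abs_deriv_smul measurableSet_Ioo
      (fun θ _ => ((Real.hasDerivAt_sin θ).const_mul (Real.sqrt 2)).hasDerivWithinAt)
      (fun a ha b hb hab =>
        Real.injOn_sin (Ioo_subset_Icc_self ha) (Ioo_subset_Icc_self hb)
          (mul_left_cancel₀ h2.ne' hab))]
  rw [MeasureTheory.setIntegral_congr_fun measurableSet_Ioo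
      (g := fun θ => ((2:ℝ)^n / Real.pi) * Real.sin θ ^ (2*n))
      (by
        intro θ hθ
        have hcos : 0 < Real.cos θ := Real.cos_pos_of_mem_Ioo hθ
        have hs : 2 - (Real.sqrt 2 * Real.sin θ) ^ 2 = 2 * Real.cos θ ^ 2 := by
          rw [mul_pow, Real.sq_sqrt (by norm_num : (0:ℝ) ≤ 2)]
          nlinarith [Real.sin_sq_add_cos_sq θ]
        have hsq : Real.sqrt (2 * Real.cos θ ^ 2) = Real.sqrt 2 * Real.cos θ := by
          rw [Real.sqrt_mul (by norm_num : (0:ℝ) ≤ 2), Real.sqrt_sq hcos.le]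
        have hpow : (Real.sqrt 2 * Real.sin θ) ^ (2*n) = 2^n * Real.sin θ ^ (2*n) := by
          rw [mul_pow, pow_mul, Real.sq_sqrt (by norm_num : (0:ℝ) ≤ 2)]
        have habs : |Real.sqrt 2 * Real.cos θ| = Real.sqrt 2 * Real.cos θ :=
          abs_of_pos (by positivity)
        simp only [smul_eq_mul]
        rw [hs, hsq, hpow, habs]
        have hne : Real.sqrt 2 * Real.cos θ ≠ 0 := by positivity
        field_simp)]
  rw [← integral_Ioc_eq_integral_Ioo,
      ← intervalIntegral.integral_of_le (by linarith : -(Real.pi/2) ≤ Real.pi/2)]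
  rw [intervalIntegral.integral_const_mul, sin_pow_reflect, integral_sin_pow_even, prod_ratio]
  rw [show (4:ℝ) = 2*2 by norm_num, mul_pow]
  have hp2 : (2:ℝ)^n ≠ 0 := by positivity
  field_simp


lemma jacobiOp_apply (ω : ℕ → ℝ) (f : ℕ →₀ ℝ) (i : ℕ) :
    (jacobiOp ω (fun _ => 0)) f i =
      (if i = 0 then 0 else Real.sqrt (ω (i-1)) * f (i-1)) + Real.sqrt (ω i) * f (i+1) := by
  induction f using Finsupp.induction_linear with
  | zero => simp
  | add f g hf hg =>
    rw [map_add, Finsupp.add_apply, hf, hg, Finsupp.add_apply, Finsupp.add_apply]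
    split <;> ring
  | single n c =>
    rw [jacobiOp, Finsupp.lsum_single, LinearMap.toSpanSingleton_apply]
    rcases Nat.eq_zero_or_pos n with rfl | hn
    · rw [if_pos rfl]
      simp only [Pi.zero_apply, zero_smul, add_zero, zero_add, Finsupp.smul_apply,
        Finsupp.add_apply, Finsupp.single_apply, smul_eq_mul]
      rcases Nat.eq_zero_or_pos i with rfl | hi
      · simp [show (0:ℕ) ≠ 1 by omega]
      · obtain ⟨j, rfl⟩ : ∃ j, i = j + 1 := ⟨i - 1, by omega⟩
        rw [Nat.add_sub_cancel]
        rcases Nat.eq_zero_or_pos j with rfl | hj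
        · simp; ring
        · simp [show ¬(0 + 1 = j + 1) by omega, show ¬((0:ℕ) = j) by omega,
            show ¬((0:ℕ) = j + 1 + 1) by omega, show j ≠ 0 by omega]
    · rw [if_neg (by omega)]
      simp only [Pi.zero_apply, zero_smul, add_zero, zero_add, Finsupp.smul_apply,
        Finsupp.add_apply, Finsupp.single_apply, smul_eq_mul]
      rcases Nat.eq_zero_or_pos i with rfl | hi
      · rcases eq_or_ne n 1 with rfl | hn1
        · simp [show ¬(1 + 1 = 0) by omega, show (1:ℕ) - 1 = 0 by omega]; ring
        · simp [show ¬(n + 1 = 0) by omega, show ¬(n - 1 = 0) by omega,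
            show ¬(n = 0 + 1) by omega]
      · obtain ⟨j, rfl⟩ : ∃ j, i = j + 1 := ⟨i - 1, by omega⟩
        rw [Nat.add_sub_cancel]
        rcases eq_or_ne n j with rfl | hnj
        · simp [show ¬(n - 1 = n + 1) by omega, show ¬(n = n + 1 + 1) by omega,
            show ¬(n = 2 + n) by omega, show ¬(n = n + 2) by omega]
          try ring
        · rcases eq_or_ne n (j+2) with rfl | hnj2
          · simp [show ¬(j + 2 + 1 = j + 1) by omega, show j + 2 - 1 = j + 1 by omega,
              show ¬(j + 2 = j) by omega]
            ring
          · simp [show ¬(n + 1 = j + 1) by omega, show ¬(n - 1 = j + 1) by omega,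
              show n ≠ j by omega, show ¬(n = j + 1 + 1) by omega]




noncomputable def VV (q : ℝ) (k m : ℕ) (i : ℤ) : ℝ :=
  if 0 ≤ i then
    ((((1 / Real.sqrt (qOmega q k + qOmega q (k - 1))) •
        jacobiOp (qOmega q) (fun _ => 0)) ^ m) (Finsupp.single k 1)) i.toNat
  else 0

lemma VV_succ (q : ℝ) (k m : ℕ) (i : ℤ) (hi : 0 ≤ i) :
    VV q k (m+1) i = (1 / Real.sqrt (qOmega q k + qOmega q (k-1))) *
      (Real.sqrt (qOmega q (i-1).toNat) * VV q k m (i-1) +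
        Real.sqrt (qOmega q i.toNat) * VV q k m (i+1)) := by
  rw [VV, if_pos hi, pow_succ', Module.End.mul_apply, LinearMap.smul_apply, Finsupp.smul_apply,
    jacobiOp_apply]
  rcases eq_or_lt_of_le hi with h0 | h0
  · have hi0 : i = 0 := h0.symm
    subst hi0
    rw [show ((0:ℤ).toNat) = 0 from rfl, if_pos rfl]
    rw [VV, if_neg (by omega), VV, if_pos (by omega)]
    rw [smul_eq_mul, show ((0:ℤ)+1).toNat = 0 + 1 by norm_num]
    ring
  · have hT : i.toNat ≠ 0 := by omega
    rw [if_neg hT]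
    rw [VV, if_pos (by omega), VV, if_pos (by omega)]
    rw [smul_eq_mul, show (i-1).toNat = i.toNat - 1 by omega,
      show (i+1).toNat = i.toNat + 1 by omega]

lemma qOmega_pos {q : ℝ} (hq₁ : -1 < q) (hq₂ : q ≤ 1) (n : ℕ) : 0 < qOmega q n := by
  rcases eq_or_lt_of_le hq₂ with rfl | hlt
  · simp [qOmega]
    positivity
  · rw [qOmega, geom_sum_eq (ne_of_lt hlt)]
    have habs : |q| < 1 := abs_lt.2 ⟨hq₁, hlt⟩
    have h1 : q ^ (n+1) < 1 := by
      calc q ^ (n+1) ≤ |q ^ (n+1)| := le_abs_self _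
        _ = |q| ^ (n+1) := abs_pow q (n+1)
        _ < 1 := pow_lt_one₀ (abs_nonneg q) habs (Nat.succ_ne_zero n)
    apply div_pos_of_neg_of_neg <;> linarith

lemma qOmega_one (n : ℕ) : qOmega 1 n = (n : ℝ) + 1 := by
  simp [qOmega]

lemma qOmega_tendsto {q : ℝ} (h : |q| < 1) :
    Tendsto (qOmega q) atTop (nhds (1/(1-q))) := by
  have hq1 : q ≠ 1 := by
    intro h1; rw [h1] at h; simp at h
  have hne : q - 1 ≠ 0 := sub_ne_zero.2 hq1
  have hpow : Tendsto (fun n : ℕ => q ^ (n+1)) atTop (nhds 0) :=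
    (tendsto_pow_atTop_nhds_zero_of_abs_lt_one h).comp (tendsto_add_atTop_nat 1)
  have h2 : Tendsto (fun n : ℕ => (q ^ (n+1) - 1)/(q-1)) atTop (nhds ((0 - 1)/(q-1))) :=
    (hpow.sub_const 1).div_const _
  have hne' : (1:ℝ) - q ≠ 0 := fun h' => hq1 (by linarith)
  have h3 : (0 - 1)/(q-1) = 1/(1-q) := by rw [div_eq_div_iff hne hne']; ring
  rw [h3] at h2
  refine h2.congr fun n => ?_
  rw [qOmega, geom_sum_eq hq1]

lemma aux_div (a b : ℝ) :
    Tendsto (fun k : ℕ => ((k:ℝ) + a)/(2*(k:ℝ) + b)) atTop (nhds (1/2)) := by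
  have ha : Tendsto (fun k : ℕ => a/(k:ℝ)) atTop (nhds 0) :=
    tendsto_const_div_atTop_nhds_zero_nat a
  have hb : Tendsto (fun k : ℕ => b/(k:ℝ)) atTop (nhds 0) :=
    tendsto_const_div_atTop_nhds_zero_nat b
  have hnum : Tendsto (fun k : ℕ => 1 + a/(k:ℝ)) atTop (nhds 1) := by
    simpa using (tendsto_const_nhds (x := (1:ℝ)) (f := atTop)).add ha
  have hden : Tendsto (fun k : ℕ => 2 + b/(k:ℝ)) atTop (nhds 2) := by
    simpa using (tendsto_const_nhds (x := (2:ℝ)) (f := atTop)).add hb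
  have h := hnum.div hden (by norm_num)
  refine h.congr' ?_
  filter_upwards [eventually_ge_atTop 1, hden.eventually_ne (by norm_num : (2:ℝ) ≠ 0)]
    with k hk hne
  have hk0 : (k:ℝ) ≠ 0 := Nat.cast_ne_zero.2 (by omega)
  simp only [Pi.div_apply]
  have e1 : (k:ℝ) + a = (k:ℝ) * (1 + a/(k:ℝ)) := by field_simp
  have e2 : 2*(k:ℝ) + b = (k:ℝ) * (2 + b/(k:ℝ)) := by field_simp
  rw [e1, e2, mul_div_mul_left _ _ hk0]

lemma coeff_tendsto {q : ℝ} (hq₁ : -1 < q) (hq₂ : q ≤ 1) (d : ℤ) :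
    Tendsto (fun k : ℕ => (1 / Real.sqrt (qOmega q k + qOmega q (k-1))) *
        Real.sqrt (qOmega q ((k:ℤ)+d).toNat)) atTop (nhds ((Real.sqrt 2)⁻¹)) := by
  have hratio : Tendsto (fun k : ℕ =>
      qOmega q ((k:ℤ)+d).toNat / (qOmega q k + qOmega q (k-1))) atTop (nhds (2⁻¹)) := by
    rcases eq_or_lt_of_le hq₂ with rfl | hlt
    · have haux := aux_div ((d:ℝ) + 1) 1
      rw [show (1:ℝ)/2 = 2⁻¹ by norm_num] at haux
      refine haux.congr' ?_
      filter_upwards [eventually_ge_atTop (d.natAbs + 1)] with k hk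
      rw [qOmega_one, qOmega_one, qOmega_one]
      have h1 : (((k:ℤ)+d).toNat : ℝ) = (k:ℝ) + (d:ℝ) := by
        have : (((k:ℤ)+d).toNat : ℤ) = (k:ℤ) + d := by omega
        exact_mod_cast congrArg (fun z : ℤ => (z:ℝ)) this
      have h2 : ((k - 1 : ℕ) : ℝ) = (k:ℝ) - 1 := by
        have : ((k - 1 : ℕ) : ℤ) = (k:ℤ) - 1 := by omega
        exact_mod_cast congrArg (fun z : ℤ => (z:ℝ)) this
      rw [h1, h2]
      ring
    · have habs : |q| < 1 := abs_lt.2 ⟨hq₁, hlt⟩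
      have hω := qOmega_tendsto habs
      set s : ℝ := 1/(1-q) with hs
      have hspos : 0 < s := by
        have h1q : (0:ℝ) < 1 - q := by linarith
        rw [hs]; positivity
      have htoNat : Tendsto (fun k : ℕ => ((k:ℤ)+d).toNat) atTop atTop :=
        tendsto_atTop_atTop.2 fun b => ⟨b + d.natAbs, fun k hk => by omega⟩
      have hA : Tendsto (fun k : ℕ => qOmega q ((k:ℤ)+d).toNat) atTop (nhds s) := hω.comp htoNat
      have hB : Tendsto (fun k : ℕ => qOmega q (k-1)) atTop (nhds s) :=
        hω.comp (tendsto_sub_atTop_nat 1)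
      have hden : Tendsto (fun k : ℕ => qOmega q k + qOmega q (k-1)) atTop (nhds (s + s)) :=
        hω.add hB
      have h := hA.div hden (by linarith)
      have : s / (s + s) = 2⁻¹ := by
        field_simp
        ring
      rwa [this] at h
  have hsqrt : Tendsto (fun k : ℕ =>
      Real.sqrt (qOmega q ((k:ℤ)+d).toNat / (qOmega q k + qOmega q (k-1)))) atTop
      (nhds (Real.sqrt 2⁻¹)) :=
    (Real.continuous_sqrt.tendsto _).comp hratio
  rw [Real.sqrt_inv] at hsqrt
  refine hsqrt.congr fun k => ?_
  rw [Real.sqrt_div (qOmega_pos hq₁ hq₂ _).le, div_eq_mul_inv, mul_comm, one_div]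

lemma main_tendsto {q : ℝ} (hq₁ : -1 < q) (hq₂ : q ≤ 1) :
    ∀ m (j : ℤ), Tendsto (fun k : ℕ => VV q k m ((k:ℤ)+j)) atTop (nhds (tt m j)) := by
  intro m
  induction m with
  | zero =>
    intro j
    refine Tendsto.congr' ?_ tendsto_const_nhds
    filter_upwards [eventually_ge_atTop (j.natAbs + 1)] with k hk
    rw [VV, if_pos (by omega), pow_zero, Module.End.one_apply, Finsupp.single_apply]
    rcases eq_or_ne j 0 with rfl | hj
    · rw [if_pos (by omega)]
      simp [tt]
    · rw [if_neg (by omega)]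
      simp [tt, hj]
  | succ m ih =>
    intro j
    have h1 := (coeff_tendsto hq₁ hq₂ (j-1)).mul (ih (j-1))
    have h2 := (coeff_tendsto hq₁ hq₂ j).mul (ih (j+1))
    have h := h1.add h2
    have hval : (Real.sqrt 2)⁻¹ * tt m (j-1) + (Real.sqrt 2)⁻¹ * tt m (j+1) = tt (m+1) j := rfl
    rw [hval] at h
    refine h.congr' ?_
    filter_upwards [eventually_ge_atTop (j.natAbs + 1)] with k hk
    rw [VV_succ q k m _ (by omega), show (k:ℤ) + j - 1 = (k:ℤ) + (j-1) by ring,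
      show (k:ℤ) + j + 1 = (k:ℤ) + (j+1) by ring]
    ring

end QGaussAux

/-- Classical limit of the quantum decomposition of the `q`-Gaussian distribution
(`−1 < q ≤ 1`, `ω n = 1 + q + ⋯ + qⁿ`, `α n = 0`): the normalized moments converge
to those of the arcsine law. -/
theorem qGaussian_classical_limit_arcsine (q : ℝ) (hq₁ : -1 < q) (hq₂ : q ≤ 1) (m : ℕ) :
    Tendsto
      (fun k : ℕ =>
        ((((1 / Real.sqrt (qOmega q k + qOmega q (k - 1))) •
            jacobiOp (qOmega q) (fun _ => 0)) ^ m)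
          (Finsupp.single k 1)) k)
      atTop
      (nhds (∫ x in (-Real.sqrt 2)..(Real.sqrt 2), x ^ m / (Real.pi * Real.sqrt (2 - x ^ 2)))) := by
  have hmain := QGaussAux.main_tendsto hq₁ hq₂ m 0
  have hfun : (fun k : ℕ => QGaussAux.VV q k m ((k:ℤ)+0)) =
      fun k : ℕ =>
        ((((1 / Real.sqrt (qOmega q k + qOmega q (k - 1))) •
            jacobiOp (qOmega q) (fun _ => 0)) ^ m)
          (Finsupp.single k 1)) k := by
    funext k
    rw [QGaussAux.VV, if_pos (by omega)]
    norm_num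
  rw [hfun] at hmain
  have hint : (∫ x in (-Real.sqrt 2)..(Real.sqrt 2),
      x ^ m / (Real.pi * Real.sqrt (2 - x ^ 2))) = QGaussAux.tt m 0 := by
    rcases Nat.even_or_odd m with ⟨n, rfl⟩ | hodd
    · rw [show n + n = 2*n by ring, QGaussAux.integral_even_val n, QGaussAux.tt_eq,
        QGaussAux.NN_even, pow_mul, inv_pow, Real.sq_sqrt (by norm_num : (0:ℝ) ≤ 2),
        inv_pow, div_eq_mul_inv]
      ring
    · obtain ⟨n, rfl⟩ := hodd
      rw [QGaussAux.integral_odd_vanish _ ⟨n, rfl⟩, QGaussAux.tt_eq, QGaussAux.NN_odd]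
      simp
  rw [hint]
  exact hmain
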